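/- A connected 4-regular graph with a framing (a pairing of the four half-edges at each vertex into two opposite pairs) admits a source-sink orientation if and only if the associated orientation-double-cover condition holds; equivalently, admitting a source-sink orientation is preserved under smoothing at a vertex followed by un-smoothing. -/

import Mathlib

/-- A framed 4-valent graph, encoded by its darts (half-edges): `edgeInv`
pairs the two darts of each edge, `opp` pairs each dart with the opposite
dart at the same vertex, and every vertex carries exactly four darts. -/
structure FramedFourGraph where
  /-- darts (half-edges) -/
  D : Type
  /-- vertices -/
  V : Type
  [fintypeD : Fintype D]
  [decD : DecidableEq D]
  [decV : DecidableEq V]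
  /-- the other dart of the same edge -/
  edgeInv : D → D
  /-- the opposite dart at the same vertex -/
  opp : D → D
  /-- the vertex a dart is attached to -/
  vtx : D → V
  edgeInv_invol : ∀ d, edgeInv (edgeInv d) = d
  edgeInv_ne : ∀ d, edgeInv d ≠ d
  opp_invol : ∀ d, opp (opp d) = d
  opp_ne : ∀ d, opp d ≠ d
  vtx_opp : ∀ d, vtx (opp d) = vtx d
  fourValent : ∀ d : D, (Finset.univ.filter fun d' => vtx d' = vtx d).card = 4

attribute [instance] FramedFourGraph.fintypeD FramedFourGraph.decD FramedFourGraph.decV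

/-- A source-sink orientation: each edge is oriented (the two darts of an edge
get opposite in/out status), and at every vertex one opposite pair of darts is
outgoing while the other opposite pair is incoming. -/
def FramedFourGraph.AdmitsSourceSink (G : FramedFourGraph) : Prop :=
  ∃ o : G.D → Bool,
    (∀ d, o (G.edgeInv d) = ! o d) ∧
    (∀ d, o (G.opp d) = o d) ∧
    (∀ d d', G.vtx d' = G.vtx d → d' ≠ d → d' ≠ G.opp d → o d' = ! o d)

/-- One step in the orientation double cover: the fiber coordinate flips when
passing to the other dart of an edge and when passing to a non-opposite dart
at the same vertex, and is preserved when passing to the opposite dart. -/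
def FramedFourGraph.Step (G : FramedFourGraph) (p q : G.D × Bool) : Prop :=
  (q.1 = G.edgeInv p.1 ∧ q.2 = ! p.2) ∨
  (q.1 = G.opp p.1 ∧ q.2 = p.2) ∨
  (G.vtx q.1 = G.vtx p.1 ∧ q.1 ≠ p.1 ∧ q.1 ≠ G.opp p.1 ∧ q.2 = ! p.2)

/-- The orientation-double-cover condition: the double cover splits, i.e. no
point of the cover is connected to the point with the opposite fiber
coordinate over the same dart. -/
def FramedFourGraph.DoubleCoverSplits (G : FramedFourGraph) : Prop :=
  ∀ (d : G.D) (s : Bool), ¬ Relation.ReflTransGen G.Step (d, s) (d, ! s)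

lemma FramedFourGraph.step_symm (G : FramedFourGraph) :
    Symmetric G.Step := by
  rintro p q (⟨h1, h2⟩ | ⟨h1, h2⟩ | ⟨h1, h2, h3, h4⟩)
  · left
    refine ⟨by rw [h1, G.edgeInv_invol], by rw [h2, Bool.not_not]⟩
  · right; left
    exact ⟨by rw [h1, G.opp_invol], h2.symm⟩
  · right; right
    refine ⟨h1.symm, fun h => h2 h.symm, ?_, by rw [h4, Bool.not_not]⟩
    intro h
    apply h3
    rw [h, G.opp_invol]

/-- A connected framed 4-regular graph admits a source-sink
orientation if and only if the orientation-double-cover condition holds. -/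
theorem stmt4 (G : FramedFourGraph)
    (hconn : ∀ d d' : G.D,
      Relation.ReflTransGen (fun a b => G.vtx a = G.vtx b ∨ b = G.edgeInv a) d d') :
    G.AdmitsSourceSink ↔ G.DoubleCoverSplits := by
  classical
  constructor
  · rintro ⟨o, h1, h2, h3⟩ d s hreach
    have key : ∀ p q : G.D × Bool, Relation.ReflTransGen G.Step p q →
        xor p.2 (o p.1) = xor q.2 (o q.1) := by
      intro p q h
      induction h with
      | refl => rfl
      | tail _ hstep ih =>
        rw [ih]
        rcases hstep with ⟨ha, hb⟩ | ⟨ha, hb⟩ | ⟨ha, hb, hc, hd⟩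
        · rw [ha, hb, h1]
          cases (Prod.snd _ : Bool) <;> cases o _ <;> rfl
        · rw [ha, hb, h2]
        · rw [hd, h3 _ _ ha hb hc]
          cases (Prod.snd _ : Bool) <;> cases o _ <;> rfl
    have := key _ _ hreach
    simp at this
  · intro hsplit
    by_cases hD : Nonempty G.D
    · obtain ⟨d0⟩ := hD
      have lift : ∀ (a b : G.D),
          Relation.ReflTransGen (fun a b => G.vtx a = G.vtx b ∨ b = G.edgeInv a) a b →
          ∀ s : Bool, ∃ s', Relation.ReflTransGen G.Step (a, s) (b, s') := by
        intro a b h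
        induction h with
        | refl => exact fun s => ⟨s, .refl⟩
        | @tail b c _ hstep ih =>
          intro s
          obtain ⟨s', hs'⟩ := ih s
          rcases hstep with hv | he
          · by_cases hc : c = b
            · exact ⟨s', hc ▸ hs'⟩
            by_cases hoc : c = G.opp b
            · exact ⟨s', hs'.tail (Or.inr (Or.inl ⟨hoc, rfl⟩))⟩
            · exact ⟨!s', hs'.tail (Or.inr (Or.inr ⟨hv.symm, hc, hoc, rfl⟩))⟩
          · exact ⟨!s', hs'.tail (Or.inl ⟨he, rfl⟩)⟩
      set o : G.D → Bool :=
        fun d => if Relation.ReflTransGen G.Step (d0, true) (d, true) then true else false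
        with ho
      have symmR : Symmetric (Relation.ReflTransGen G.Step) :=
        (@Relation.ReflTransGen.stdSymm _ G.Step ⟨fun _ _ h => G.step_symm h⟩).symm
      have exists_reach : ∀ d : G.D, Relation.ReflTransGen G.Step (d0, true) (d, o d) := by
        intro d
        by_cases h : Relation.ReflTransGen G.Step (d0, true) (d, true)
        · rw [show o d = true from if_pos h]; exact h
        · obtain ⟨s', hs'⟩ := lift d0 d (hconn d0 d) true
          cases s' with
          | true => exact absurd hs' h
          | false => simpa [ho, h] using hs'
      have unique : ∀ (d : G.D) (s : Bool),
          Relation.ReflTransGen G.Step (d0, true) (d, s) → o d = s := by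
        intro d s hrs
        by_contra hne
        have hod : o d = !s := by
          cases s <;> cases hos : o d <;> simp_all
        have := (symmR hrs).trans (hod ▸ exists_reach d)
        exact hsplit d s this
      refine ⟨o, ?_, ?_, ?_⟩
      · intro d
        exact unique _ _ ((exists_reach d).tail (Or.inl ⟨rfl, rfl⟩))
      · intro d
        exact unique _ _ ((exists_reach d).tail (Or.inr (Or.inl ⟨rfl, rfl⟩)))
      · intro d d' hv hne hno
        exact unique _ _ ((exists_reach d).tail (Or.inr (Or.inr ⟨hv, hne, hno, rfl⟩)))
    · exact ⟨fun d => false, fun d => (hD ⟨d⟩).elim, fun d => (hD ⟨d⟩).elim,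
        fun d _ _ _ _ => (hD ⟨d⟩).elim⟩
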